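/- Let K be a field of characteristic 0 with a group homomorphism ex : K⁺ → K^* satisfying the Schanuel property, and pick x₁ transcendental over ℚ. Define x_{i+1} = ex(x_i) for i = 1,…,n−1, and suppose ex(x_n) ∈ ℚ. Then trdeg_ℚ(x₁,…,xₙ) ≤ n, and if in addition x₁,…,xₙ are ℚ-linearly independent, trdeg_ℚ(x₁,…,xₙ) = n. -/
import Mathlib


/-- Transcendence degree over `ℚ` of a subset `S` of a field of characteristic zero. -/
noncomputable def trdegQ {K : Type} [Field K] [CharZero K] (S : Set K) : ℕ :=
  sSup {n | ∃ t : Finset K, ↑t ⊆ S ∧ t.card = n ∧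
    AlgebraicIndependent ℚ (fun x : (t : Set K) => (x : K))}

/-- The Schanuel property for `ex : K → K`. -/
def SchanuelProperty {K : Type} [Field K] [CharZero K] (ex : K → K) : Prop :=
  ∀ (n : ℕ) (x : Fin n → K), LinearIndependent ℚ x →
    n ≤ trdegQ (Set.range x ∪ Set.range (ex ∘ x))

theorem stmt12 {K : Type} [Field K] [CharZero K]
    (ex : K → K)
    (hhom : ∀ x y : K, ex (x + y) = ex x * ex y)
    (hne : ∀ x : K, ex x ≠ 0)
    (hSC : SchanuelProperty ex)
    (n : ℕ) (hn : 1 ≤ n) (x : Fin n → K)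
    (htrans : Transcendental ℚ (x ⟨0, hn⟩))
    (hstep : ∀ (i : ℕ) (h : i + 1 < n), x ⟨i + 1, h⟩ = ex (x ⟨i, Nat.lt_of_succ_lt h⟩))
    (hlast : ∃ q : ℚ, ex (x ⟨n - 1, Nat.sub_lt hn Nat.one_pos⟩) = (q : K)) :
    trdegQ (Set.range x) ≤ n ∧
      (LinearIndependent ℚ x → trdegQ (Set.range x) = n) := by
  classical
  obtain ⟨q, hq⟩ := hlast
  -- any finset inside range x has card ≤ n
  have hcard : ∀ t : Finset K, ↑t ⊆ Set.range x → t.card ≤ n := by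
    intro t ht
    have hsub : t ⊆ Finset.image x Finset.univ := by
      intro a ha
      obtain ⟨i, hi⟩ := ht ha
      exact Finset.mem_image.2 ⟨i, Finset.mem_univ i, hi⟩
    calc t.card ≤ (Finset.image x Finset.univ).card := Finset.card_le_card hsub
      _ ≤ Finset.univ.card := Finset.card_image_le
      _ = n := by simp
  set B := {m | ∃ t : Finset K, ↑t ⊆ Set.range x ∧ t.card = m ∧
    AlgebraicIndependent ℚ (fun x : (t : Set K) => (x : K))} with hBdef
  have hBub : ∀ m ∈ B, m ≤ n := by
    rintro m ⟨t, ht, rfl, -⟩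
    exact hcard t ht
  have hBbdd : BddAbove B := ⟨n, hBub⟩
  have h1 : trdegQ (Set.range x) ≤ n := csSup_le' hBub
  refine ⟨h1, fun hlin => ?_⟩
  -- Schanuel gives the lower bound
  have hSC' := hSC n x hlin
  set A := {m | ∃ t : Finset K, ↑t ⊆ Set.range x ∪ Set.range (ex ∘ x) ∧ t.card = m ∧
    AlgebraicIndependent ℚ (fun x : (t : Set K) => (x : K))} with hAdef
  have hSC'' : n ≤ sSup A := hSC'
  -- the exponentials lie in range x ∪ {q}
  have hunion : Set.range x ∪ Set.range (ex ∘ x) ⊆ Set.range x ∪ {(q : K)} := by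
    rintro a (ha | ⟨i, rfl⟩)
    · exact Or.inl ha
    · by_cases hi : i.val + 1 < n
      · left
        refine ⟨⟨i.val + 1, hi⟩, ?_⟩
        rw [hstep i.val hi]
        simp [Function.comp]
      · right
        have hi' : i.val = n - 1 := by omega
        have : i = ⟨n - 1, Nat.sub_lt hn Nat.one_pos⟩ := Fin.ext hi'
        simp [Function.comp, this, hq]
  have hAbdd : BddAbove A := by
    refine ⟨n + 1, ?_⟩
    rintro m ⟨t, ht, rfl, -⟩
    have hsub : t ⊆ insert (q : K) (Finset.image x Finset.univ) := by
      intro a ha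
      rcases hunion (ht ha) with ⟨i, hi⟩ | hqa
      · exact Finset.mem_insert.2 (Or.inr (Finset.mem_image.2 ⟨i, Finset.mem_univ i, hi⟩))
      · exact Finset.mem_insert.2 (Or.inl hqa)
    calc t.card ≤ _ := Finset.card_le_card hsub
      _ ≤ (Finset.image x Finset.univ).card + 1 := Finset.card_insert_le _ _
      _ ≤ n + 1 := by
          have := (Finset.card_image_le (f := x) (s := Finset.univ))
          simp at this ⊢; omega
  have hAne : A.Nonempty := by
    by_contra h
    rw [Set.not_nonempty_iff_eq_empty] at h
    rw [h, csSup_empty] at hSC''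
    simp at hSC''
    omega
  obtain ⟨t, ht, htc, htind⟩ := Nat.sSup_mem hAne hAbdd
  -- q ∉ t since all elements of t are transcendental
  have hqt : (q : K) ∉ t := by
    intro hmem
    have htr : Transcendental ℚ ((q : K)) :=
      htind.transcendental (⟨(q : K), hmem⟩ : (t : Set K))
    exact htr (by simpa using isAlgebraic_algebraMap (R := ℚ) (A := K) q)
  have htx : ↑t ⊆ Set.range x := by
    intro a ha
    rcases hunion (ht ha) with h | h
    · exact h
    · exact absurd (h ▸ ha) (by simpa [Set.mem_singleton_iff.1 h] using hqt)
  have hmemB : sSup A ∈ B := ⟨t, htx, htc, htind⟩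
  have h2 : sSup A ≤ trdegQ (Set.range x) := le_csSup hBbdd hmemB
  omega
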